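/- Let s be a positive integer, let K be a complex Hadamard matrix of order s+1 that is normalized (all entries of its first row equal 1), and let T be the s×(s+1) matrix consisting of the s noninitial rows of K. Let X, Y be s×s matrices and D an (s+1)×(s+1) matrix, all with unimodular entries, and suppose that: (I) D D* = D* D = (s−1) I_{s+1} + 2 J_{s+1}; (II) D J_{s+1} = J_{s+1} D; (III) X + Y = −(1/(s+1)) T D* T*; (IV) (X − Y)(X − Y)* = (3s+1) I_s. Then the Petrescu array H = [[X, Y, T], [Y, X, T], [T*, T*, D]] is a complex Hadamard matrix of order 3s+1. -/

import Mathlib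

open Matrix

/-- Petrescu's array: the `(3s+1) × (3s+1)` block matrix
`[[X, Y, T], [Y, X, T], [Tᴴ, Tᴴ, D]]`. -/
def petrescuArray {s : ℕ} (X Y : Matrix (Fin s) (Fin s) ℂ)
    (T : Matrix (Fin s) (Fin (s + 1)) ℂ) (D : Matrix (Fin (s + 1)) (Fin (s + 1)) ℂ) :
    Matrix ((Fin s ⊕ Fin s) ⊕ Fin (s + 1)) ((Fin s ⊕ Fin s) ⊕ Fin (s + 1)) ℂ :=
  Matrix.fromBlocks (Matrix.fromBlocks X Y Y X) (Matrix.fromRows T T)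
    (Matrix.fromCols Tᴴ Tᴴ) D

/-- The `m × m` all-ones matrix. -/
def allOnes (m : ℕ) : Matrix (Fin m) (Fin m) ℂ := Matrix.of fun _ _ => 1

lemma fromRows_add'' {R : Type*} {m₁ m₂ n : Type*} [AddCommMonoid R]
    (A₁ B₁ : Matrix m₁ n R) (A₂ B₂ : Matrix m₂ n R) :
    fromRows A₁ A₂ + fromRows B₁ B₂ = fromRows (A₁ + B₁) (A₂ + B₂) := by
  ext (i | i) j <;> simp

lemma fromColumns_add'' {R : Type*} {m n₁ n₂ : Type*} [AddCommMonoid R]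
    (A₁ B₁ : Matrix m n₁ R) (A₂ B₂ : Matrix m n₂ R) :
    fromCols A₁ A₂ + fromCols B₁ B₂ = fromCols (A₁ + B₁) (A₂ + B₂) := by
  ext i (j | j) <;> simp

/-- If `T` consists of the noninitial rows of a normalized complex Hadamard matrix of
order `s+1`, the matrices `X, Y, D` have unimodular entries, and conditions (I)–(IV)
hold, then Petrescu's array `[[X, Y, T], [Tᴴ, Tᴴ, D]]` is a complex
Hadamard matrix of order `3s+1`. -/
theorem petrescuArray_hadamard_of_system (s : ℕ) (hs : 0 < s)
    (K : Matrix (Fin (s + 1)) (Fin (s + 1)) ℂ)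
    (hKuni : ∀ i j, ‖K i j‖ = 1)
    (hKhad : K * Kᴴ = ((s + 1 : ℕ) : ℂ) • 1)
    (hKnorm : ∀ j, K 0 j = 1)
    (T : Matrix (Fin s) (Fin (s + 1)) ℂ)
    (hT : ∀ (i : Fin s) (j : Fin (s + 1)), T i j = K i.succ j)
    (X Y : Matrix (Fin s) (Fin s) ℂ)
    (D : Matrix (Fin (s + 1)) (Fin (s + 1)) ℂ)
    (hX : ∀ i j, ‖X i j‖ = 1)
    (hY : ∀ i j, ‖Y i j‖ = 1)
    (hD : ∀ i j, ‖D i j‖ = 1)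
    (h1 : D * Dᴴ = ((s : ℂ) - 1) • 1 + (2 : ℂ) • allOnes (s + 1))
    (h1' : Dᴴ * D = ((s : ℂ) - 1) • 1 + (2 : ℂ) • allOnes (s + 1))
    (h2 : D * allOnes (s + 1) = allOnes (s + 1) * D)
    (h3 : X + Y = -(((s : ℂ) + 1)⁻¹ • (T * Dᴴ * Tᴴ)))
    (h4 : (X - Y) * (X - Y)ᴴ = ((3 * s + 1 : ℕ) : ℂ) • 1) :
    (∀ i j, ‖petrescuArray X Y T D i j‖ = 1) ∧
      petrescuArray X Y T D * (petrescuArray X Y T D)ᴴ = ((3 * s + 1 : ℕ) : ℂ) • 1 := by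
  have hc0 : ((s : ℂ) + 1) ≠ 0 := by
    have := Nat.cast_add_one_ne_zero (R := ℂ) s
    exact_mod_cast this
  have hcast : ((s + 1 : ℕ) : ℂ) = (s : ℂ) + 1 := by push_cast; ring
  -- Kᴴ K = (s+1) • 1
  have hKK : Kᴴ * K = ((s : ℂ) + 1) • 1 := by
    have hinv : K * (((s : ℂ) + 1)⁻¹ • Kᴴ) = 1 := by
      rw [Matrix.mul_smul, hKhad, hcast, smul_smul, inv_mul_cancel₀ hc0, one_smul]
    have h2' := mul_eq_one_comm.mp hinv
    rw [Matrix.smul_mul] at h2'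
    calc Kᴴ * K = ((s : ℂ) + 1) • (((s : ℂ) + 1)⁻¹ • (Kᴴ * K)) := by
          rw [smul_smul, mul_inv_cancel₀ hc0, one_smul]
      _ = ((s : ℂ) + 1) • (1 : Matrix (Fin (s + 1)) (Fin (s + 1)) ℂ) := by rw [h2']
  -- T Tᴴ = (s+1) • 1
  have hTT : T * Tᴴ = ((s : ℂ) + 1) • (1 : Matrix (Fin s) (Fin s) ℂ) := by
    ext i j
    have h := congrFun (congrFun hKhad i.succ) j.succ
    simp only [mul_apply, conjTranspose_apply, Matrix.smul_apply, Matrix.one_apply, smul_eq_mul,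
      hcast] at h ⊢
    simp only [hT]
    rw [h]
    simp [Fin.succ_inj]
  -- Tᴴ T = (s+1) • 1 - J
  have hTtT : Tᴴ * T = ((s : ℂ) + 1) • (1 : Matrix (Fin (s + 1)) (Fin (s + 1)) ℂ)
      - allOnes (s + 1) := by
    ext j k
    have h := congrFun (congrFun hKK j) k
    simp only [mul_apply, conjTranspose_apply] at h
    rw [Fin.sum_univ_succ] at h
    simp only [hKnorm, star_one, one_mul, Matrix.smul_apply, smul_eq_mul] at h
    simp only [mul_apply, conjTranspose_apply, Matrix.sub_apply, Matrix.smul_apply, of_apply, smul_eq_mul,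
      hT, allOnes]
    linear_combination h
  -- T J = 0
  have hTJ : T * allOnes (s + 1) = 0 := by
    ext i j
    have h := congrFun (congrFun hKhad i.succ) 0
    simp only [mul_apply, conjTranspose_apply, Matrix.smul_apply, Matrix.one_apply, smul_eq_mul] at h
    simp only [hKnorm, star_one, mul_one] at h
    simpa [mul_apply, hT, allOnes, (Fin.succ_ne_zero i)] using h
  have hJh : (allOnes (s + 1))ᴴ = allOnes (s + 1) := by
    ext i j; simp [allOnes, conjTranspose_apply]
  have hJTt : allOnes (s + 1) * Tᴴ = 0 := by
    have := congrArg conjTranspose hTJ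
    simpa [conjTranspose_mul, hJh] using this
  -- J Dᴴ = Dᴴ J
  have hDJ : allOnes (s + 1) * Dᴴ = Dᴴ * allOnes (s + 1) := by
    have := congrArg conjTranspose h2
    simpa [conjTranspose_mul, hJh] using this
  have hTDJ : T * Dᴴ * allOnes (s + 1) = 0 := by
    rw [Matrix.mul_assoc, ← hDJ, ← Matrix.mul_assoc, hTJ, Matrix.zero_mul]
  -- key1 : (X+Y) T = -(T Dᴴ)
  have e1 : T * Dᴴ * (Tᴴ * T) = ((s : ℂ) + 1) • (T * Dᴴ) := by
    rw [hTtT, Matrix.mul_sub, Matrix.mul_smul, Matrix.mul_one, hTDJ, sub_zero]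
  have key1 : (X + Y) * T = -(T * Dᴴ) := by
    rw [h3, Matrix.neg_mul, Matrix.smul_mul, Matrix.mul_assoc (T * Dᴴ), e1, smul_smul,
      inv_mul_cancel₀ hc0, one_smul]
  -- conjTranspose of h3
  have hstar : (starRingEnd ℂ) (((s : ℂ) + 1)⁻¹) = ((s : ℂ) + 1)⁻¹ := by
    simp [map_inv₀]
  have hXYt : (X + Y)ᴴ = -(((s : ℂ) + 1)⁻¹ • (T * D * Tᴴ)) := by
    have := congrArg conjTranspose h3
    simpa [conjTranspose_add, conjTranspose_neg, conjTranspose_smul, conjTranspose_mul,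
      Matrix.mul_assoc, hstar] using this
  -- e2 : T (Dᴴ D) Tᴴ = ((s-1)(s+1)) • 1
  have e2 : T * (Dᴴ * D) * Tᴴ = (((s : ℂ) - 1) * ((s : ℂ) + 1)) • 1 := by
    rw [h1', Matrix.mul_add, Matrix.add_mul, Matrix.mul_smul, Matrix.mul_one,
      Matrix.mul_smul, Matrix.smul_mul, Matrix.smul_mul, hTJ, Matrix.zero_mul, smul_zero,
      add_zero, hTT, smul_smul]
  -- keyE : (X+Y)(X+Y)ᴴ = (s-1) • 1
  have keyE : (X + Y) * (X + Y)ᴴ = ((s : ℂ) - 1) • 1 := by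
    have hmain : (X + Y) * (T * D * Tᴴ) = (-(((s : ℂ) - 1) * ((s : ℂ) + 1))) • 1 := by
      calc (X + Y) * (T * D * Tᴴ) = ((X + Y) * T) * (D * Tᴴ) := by
            simp only [Matrix.mul_assoc]
        _ = -((T * Dᴴ) * (D * Tᴴ)) := by rw [key1, Matrix.neg_mul]
        _ = -(T * (Dᴴ * D) * Tᴴ) := by simp only [Matrix.mul_assoc]
        _ = (-(((s : ℂ) - 1) * ((s : ℂ) + 1))) • 1 := by rw [e2, neg_smul]
    rw [hXYt, Matrix.mul_neg, Matrix.mul_smul, hmain, smul_smul, ← neg_smul,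
      show -(((s : ℂ) + 1)⁻¹ * -(((s : ℂ) - 1) * ((s : ℂ) + 1))) = (s : ℂ) - 1 by
        field_simp]
  -- expansions
  have expandA : (X + Y) * (X + Y)ᴴ = X * Xᴴ + (X * Yᴴ + Y * Xᴴ) + Y * Yᴴ := by
    rw [conjTranspose_add, Matrix.add_mul, Matrix.mul_add, Matrix.mul_add]
    abel
  have expandB : (X - Y) * (X - Y)ᴴ = X * Xᴴ - (X * Yᴴ + Y * Xᴴ) + Y * Yᴴ := by
    rw [conjTranspose_sub, Matrix.sub_mul, Matrix.mul_sub, Matrix.mul_sub]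
    abel
  have eqA : X * Xᴴ + (X * Yᴴ + Y * Xᴴ) + Y * Yᴴ = ((s : ℂ) - 1) • 1 := by
    rw [← expandA]; exact keyE
  have eqB : X * Xᴴ - (X * Yᴴ + Y * Xᴴ) + Y * Yᴴ = ((3 * s + 1 : ℕ) : ℂ) • 1 := by
    rw [← expandB]; exact h4
  have keyQ : X * Yᴴ + Y * Xᴴ = (-((s : ℂ) + 1)) • 1 := by
    have h2Q : (2 : ℂ) • (X * Yᴴ + Y * Xᴴ) = (2 : ℂ) • ((-((s : ℂ) + 1)) • 1) := by
      calc (2 : ℂ) • (X * Yᴴ + Y * Xᴴ)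
          = (X * Xᴴ + (X * Yᴴ + Y * Xᴴ) + Y * Yᴴ)
            - (X * Xᴴ - (X * Yᴴ + Y * Xᴴ) + Y * Yᴴ) := by rw [two_smul]; abel
        _ = ((s : ℂ) - 1) • 1 - ((3 * s + 1 : ℕ) : ℂ) • 1 := by rw [eqA, eqB]
        _ = (2 : ℂ) • ((-((s : ℂ) + 1)) • 1) := by
            rw [smul_smul, ← sub_smul]; congr 1; push_cast; ring
    exact smul_right_injective _ two_ne_zero h2Q
  have keyP : X * Xᴴ + Y * Yᴴ = ((2 : ℂ) * (s : ℂ)) • 1 := by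
    have h2P : (2 : ℂ) • (X * Xᴴ + Y * Yᴴ) = (2 : ℂ) • (((2 : ℂ) * (s : ℂ)) • 1) := by
      calc (2 : ℂ) • (X * Xᴴ + Y * Yᴴ)
          = (X * Xᴴ + (X * Yᴴ + Y * Xᴴ) + Y * Yᴴ)
            + (X * Xᴴ - (X * Yᴴ + Y * Xᴴ) + Y * Yᴴ) := by rw [two_smul]; abel
        _ = ((s : ℂ) - 1) • 1 + ((3 * s + 1 : ℕ) : ℂ) • 1 := by rw [eqA, eqB]
        _ = (2 : ℂ) • (((2 : ℂ) * (s : ℂ)) • 1) := by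
            rw [smul_smul, ← add_smul]; congr 1; push_cast; ring
    exact smul_right_injective _ two_ne_zero h2P
  -- the four blocks
  have gA : fromBlocks X Y Y X * (fromBlocks X Y Y X)ᴴ + fromRows T T * fromCols Tᴴ Tᴴ
      = ((3 * s + 1 : ℕ) : ℂ) • 1 := by
    rw [fromBlocks_conjTranspose, fromBlocks_multiply, fromRows_mul_fromCols,
      fromBlocks_add]
    rw [show (((3 * s + 1 : ℕ) : ℂ) • (1 : Matrix (Fin s ⊕ Fin s) (Fin s ⊕ Fin s) ℂ))
        = fromBlocks (((3 * s + 1 : ℕ) : ℂ) • 1) 0 0 (((3 * s + 1 : ℕ) : ℂ) • 1) by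
      rw [← fromBlocks_one, fromBlocks_smul, smul_zero]]
    refine fromBlocks_inj.mpr ⟨?_, ?_, ?_, ?_⟩
    · rw [keyP, hTT, ← add_smul]; congr 1; push_cast; ring
    · rw [keyQ, hTT, ← add_smul, show -((s : ℂ) + 1) + ((s : ℂ) + 1) = 0 by ring, zero_smul]
    · rw [show Y * Xᴴ + X * Yᴴ = X * Yᴴ + Y * Xᴴ from add_comm _ _, keyQ, hTT, ← add_smul,
        show -((s : ℂ) + 1) + ((s : ℂ) + 1) = 0 by ring, zero_smul]
    · rw [show Y * Yᴴ + X * Xᴴ = X * Xᴴ + Y * Yᴴ from add_comm _ _, keyP, hTT, ← add_smul]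
      congr 1; push_cast; ring
  have gB : fromBlocks X Y Y X * fromRows T T + fromRows T T * Dᴴ = 0 := by
    rw [fromBlocks_mul_fromRows, fromRows_mul, fromRows_add'']
    rw [show (0 : Matrix (Fin s ⊕ Fin s) (Fin (s + 1)) ℂ) = fromRows 0 0 from fromRows_zero.symm]
    refine (fromRows_ext_iff _ _ _ _).mpr ⟨?_, ?_⟩
    · rw [← Matrix.add_mul, key1, neg_add_cancel]
    · rw [add_comm (Y * T) (X * T), ← Matrix.add_mul, key1, neg_add_cancel]
  have key1c : Tᴴ * (X + Y)ᴴ = -(D * Tᴴ) := by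
    have := congrArg conjTranspose key1
    simpa [conjTranspose_mul, conjTranspose_neg] using this
  have gC : fromCols Tᴴ Tᴴ * (fromBlocks X Y Y X)ᴴ + D * fromCols Tᴴ Tᴴ = 0 := by
    rw [fromBlocks_conjTranspose, fromCols_mul_fromBlocks, mul_fromCols, fromColumns_add'']
    rw [show (0 : Matrix (Fin (s + 1)) (Fin s ⊕ Fin s) ℂ) = fromCols 0 0
      from fromCols_zero.symm]
    refine (fromCols_ext_iff _ _ _ _).mpr ⟨?_, ?_⟩
    · rw [← Matrix.mul_add, ← conjTranspose_add, key1c, neg_add_cancel]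
    · rw [add_comm (Tᴴ * Yᴴ) (Tᴴ * Xᴴ), ← Matrix.mul_add, ← conjTranspose_add, key1c,
        neg_add_cancel]
  have gD : fromCols Tᴴ Tᴴ * fromRows T T + D * Dᴴ = ((3 * s + 1 : ℕ) : ℂ) • 1 := by
    rw [fromCols_mul_fromRows, hTtT, h1]
    push_cast
    module
  constructor
  · intro i j
    rcases i with (i | i) | i <;> rcases j with (j | j) | j <;>
      simp [petrescuArray, fromBlocks, fromCols, conjTranspose_apply,
        Complex.norm_conj, hX, hY, hD, hT, hKuni]
  · unfold petrescuArray
    rw [fromBlocks_conjTranspose, conjTranspose_fromRows_eq_fromCols_conjTranspose,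
      conjTranspose_fromCols_eq_fromRows_conjTranspose, conjTranspose_conjTranspose,
      fromBlocks_multiply, gA, gB, gC, gD]
    symm
    rw [← fromBlocks_one, fromBlocks_smul, smul_zero, smul_zero]
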